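/- Let ψ₆ : ZMod 2 → Aut(ZMod 4 × ZMod 2) be the homomorphism sending the generator of ZMod 2 to the automorphism (s, t) ↦ (3s + 2t, t) (where 2t means the image of t under the map ZMod 2 → ZMod 4 sending 1 to 2), and let G₁₀ = (ZMod 4 × ZMod 2) ⋊_{ψ₆} ZMod 2 be the corresponding semidirect product (a group of order 16). Define θ : G₁₀ → (Fin 4 → ZMod 2) on the element with (ZMod 4 × ZMod 2)-component (s, t) and ZMod 2-component l by θ = (l | φ₂(s, t)), where ( · | · ) denotes concatenation. Then there exists g ∈ G₁₀ with w_H(θ(g)) ≠ w_H(θ(g⁻¹)); in particular, θ is not a Gray map on G₁₀. -/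

import Mathlib

/-- A map `φ : G → (Fin n → ZMod 2)` is a Gray map if `d_φ(a,b) = w_H(φ(a b⁻¹))` is a
metric on `G` and moreover `d_φ(a,b) = d_H(φ a, φ b)` for all `a b`. -/
def IsGrayMap {G : Type*} [Group G] {n : ℕ} (φ : G → (Fin n → ZMod 2)) : Prop :=
  (∀ a b : G, hammingNorm (φ (a * b⁻¹)) = 0 ↔ a = b) ∧
  (∀ a b : G, hammingNorm (φ (a * b⁻¹)) = hammingNorm (φ (b * a⁻¹))) ∧
  (∀ a b c : G, hammingNorm (φ (a * c⁻¹)) ≤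
      hammingNorm (φ (a * b⁻¹)) + hammingNorm (φ (b * c⁻¹))) ∧
  (∀ a b : G, hammingNorm (φ (a * b⁻¹)) = hammingDist (φ a) (φ b))

/-- The standard Gray map on `C₄ = ZMod 4`. -/
def phi1 (i : ZMod 4) : Fin 2 → ZMod 2 :=
  if i = 0 then ![0, 0] else if i = 1 then ![0, 1] else if i = 2 then ![1, 1] else ![1, 0]

/-- The map `φ₂ : ZMod 4 × ZMod 2 → (Fin 3 → ZMod 2)`, `φ₂(i, j) = (j | φ₁ i)`. -/
def phi2 (p : ZMod 4 × ZMod 2) : Fin 3 → ZMod 2 :=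
  Matrix.vecCons p.2 (phi1 p.1)

/-- The automorphism `(s, t) ↦ (3s + 2t, t)` of `ZMod 4 × ZMod 2`, where `2t` denotes
the image of `t` under the map `ZMod 2 → ZMod 4` sending `1` to `2`. -/
def tau6 : (ZMod 4 × ZMod 2) ≃+ (ZMod 4 × ZMod 2) where
  toFun p := (3 * p.1 + 2 * (p.2.val : ZMod 4), p.2)
  invFun p := (3 * p.1 + 2 * (p.2.val : ZMod 4), p.2)
  left_inv := by decide
  right_inv := by decide
  map_add' := by decide

/-- `τ₆` as a multiplicative automorphism of `Multiplicative (ZMod 4 × ZMod 2)`. -/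
def tau6Aut : MulAut (Multiplicative (ZMod 4 × ZMod 2)) :=
  AddEquiv.toMultiplicative tau6

/-- The homomorphism `ψ₆ : C₂ → Aut(ZMod 4 × ZMod 2)` sending the generator to
`(s, t) ↦ (3s + 2t, t)`. -/
def psi6 : Multiplicative (ZMod 2) →* MulAut (Multiplicative (ZMod 4 × ZMod 2)) :=
  MonoidHom.mk' (fun l => tau6Aut ^ (Multiplicative.toAdd l).val) (by
    intro a b
    have h2 : tau6Aut ^ 2 = 1 := by ext x <;> revert x <;> decide
    show tau6Aut ^ (Multiplicative.toAdd (a * b)).val = _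
    rw [toAdd_mul, ZMod.val_add, ← pow_eq_pow_mod _ h2, pow_add])

/-- `G₁₀ = (ZMod 4 × ZMod 2) ⋊[ψ₆] ZMod 2`, a group of order 16. -/
abbrev G10 := Multiplicative (ZMod 4 × ZMod 2) ⋊[psi6] Multiplicative (ZMod 2)

/-- The map `θ(g) = (l | φ₂(s, t))`, where `g ∈ G₁₀` has `(ZMod 4 × ZMod 2)`-component
`(s, t)` and `ZMod 2`-component `l`. -/
def theta10 (g : G10) : Fin 4 → ZMod 2 :=
  Matrix.vecCons (Multiplicative.toAdd g.right) (phi2 (Multiplicative.toAdd g.left))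

/-- there is an element `g` of `G₁₀` with
`w_H(θ g) ≠ w_H(θ g⁻¹)`; in particular `θ` is not a Gray map on `G₁₀`. -/
theorem stmt19 :
    (∃ g : G10, hammingNorm (theta10 g) ≠ hammingNorm (theta10 g⁻¹)) ∧
    ¬ IsGrayMap theta10 := by
  have hex : ∃ g : G10, hammingNorm (theta10 g) ≠ hammingNorm (theta10 g⁻¹) := by
    refine ⟨⟨Multiplicative.ofAdd ((0 : ZMod 4), (1 : ZMod 2)), Multiplicative.ofAdd 1⟩, ?_⟩
    decide
  refine ⟨hex, fun h => ?_⟩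
  obtain ⟨g, hg⟩ := hex
  have := h.2.1 g 1
  simp at this
  exact hg this
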